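/- Let s ≥ t ≥ p ≥ 1 be real numbers, A, B invertible n×n complex matrices and Q an n×n Hermitian positive definite matrix. Suppose there exists α with 0 < α ≤ λₙ(Q) such that α + α^(−t/s)‖A‖² + α^(−p/s)‖B‖² < λₙ(Q). Let β = λₙ(Q − α^(−t/s)A*A − α^(−p/s)B*B), and assume t β^(−t/s)‖A‖² + p β^(−p/s)‖B‖² < s β. Then the equation Y + A*Y^(−t/s)A + B*Y^(−p/s)B = Q has a unique Hermitian positive definite solution Ȳ with αI ≤ Ȳ ≤ Q. -/

import Mathlib

open Matrix Filter
open scoped ComplexOrder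

/-- Real power of a Hermitian matrix, via the spectral decomposition
(junk value `X` if `X` is not Hermitian). -/
noncomputable def hrpow {n : ℕ} (X : Matrix (Fin n) (Fin n) ℂ) (r : ℝ) :
    Matrix (Fin n) (Fin n) ℂ :=
  if hX : X.IsHermitian then
    (hX.eigenvectorUnitary : Matrix (Fin n) (Fin n) ℂ) *
      Matrix.diagonal (fun i => ((hX.eigenvalues i ^ r : ℝ) : ℂ)) *
      (hX.eigenvectorUnitary : Matrix (Fin n) (Fin n) ℂ)ᴴ
  else X

/-- Largest eigenvalue of a Hermitian matrix (junk value `0` otherwise). -/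
noncomputable def lamMax {n : ℕ} (X : Matrix (Fin n) (Fin n) ℂ) : ℝ :=
  if hX : X.IsHermitian then ⨆ i, hX.eigenvalues i else 0

/-- Smallest eigenvalue of a Hermitian matrix (junk value `0` otherwise). -/
noncomputable def lamMin {n : ℕ} (X : Matrix (Fin n) (Fin n) ℂ) : ℝ :=
  if hX : X.IsHermitian then ⨅ i, hX.eigenvalues i else 0

/-- The spectral (ℓ²-operator) norm of a complex matrix. -/
noncomputable def specNorm {n : ℕ} (A : Matrix (Fin n) (Fin n) ℂ) : ℝ :=
  ‖Matrix.toEuclideanCLM (𝕜 := ℂ) A‖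

/-- The spectral radius of a complex matrix. -/
noncomputable def specRad {n : ℕ} (A : Matrix (Fin n) (Fin n) ℂ) : ℝ :=
  (spectralRadius ℂ A).toReal

/-- The Loewner order: `lle X Y` iff `Y - X` is positive semidefinite. -/
def lle {n : ℕ} (X Y : Matrix (Fin n) (Fin n) ℂ) : Prop := (Y - X).PosSemidef

section AuxScalar
open Filter Set

noncomputable section BinomialScalar

/-- Coefficients of the binomial series for `(1 - x) ^ (-r)`. -/
def bc (r : ℝ) : ℕ → ℝ
  | 0 => 1
  | (k+1) => bc r k * (r + k) / (k + 1)

lemma bc_zero (r : ℝ) : bc r 0 = 1 := rfl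

lemma bc_succ (r : ℝ) (k : ℕ) : bc r (k+1) = bc r k * (r + k) / (k + 1) := rfl

lemma bc_pos {r : ℝ} (hr : 0 < r) (k : ℕ) : 0 < bc r k := by
  induction k with
  | zero => norm_num [bc_zero]
  | succ k ih =>
    rw [bc_succ]
    have h1 : (0:ℝ) < r + k := by positivity
    have h2 : (0:ℝ) < (k:ℝ) + 1 := by positivity
    positivity

lemma bc_succ_mul {r : ℝ} (hr : 0 < r) (k : ℕ) :
    ((k:ℝ) + 1) * bc r (k+1) = r * bc (r+1) k := by
  induction k with
  | zero => simp [bc_succ, bc_zero]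
  | succ k ih =>
    have h2 : ((k:ℝ)) + 1 ≠ 0 := by positivity
    have h3 : ((k:ℝ)) + 1 + 1 ≠ 0 := by positivity
    have hb : bc r (k+1) = r * bc (r+1) k / ((k:ℝ)+1) := by
      rw [eq_div_iff h2]
      linear_combination ih
    rw [bc_succ r (k+1), bc_succ (r+1) k, hb]
    push_cast
    field_simp
    ring

lemma bc_ratio_tendsto (r x : ℝ) :
    Tendsto (fun k : ℕ => |x| * ((r + k) / (k + 1))) atTop (nhds |x|) := by
  have h : Tendsto (fun k : ℕ => (r + (k:ℝ)) / (k + 1)) atTop (nhds 1) := by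
    have h0 : Tendsto (fun k : ℕ => (r - 1) * (1 / ((k:ℝ) + 1)) + 1) atTop
        (nhds ((r-1) * 0 + 1)) :=
      ((tendsto_one_div_add_atTop_nhds_zero_nat).const_mul _).add tendsto_const_nhds
    simp only [mul_zero, zero_add] at h0
    refine h0.congr (fun k => ?_)
    have : ((k:ℝ) + 1) ≠ 0 := by positivity
    field_simp
    ring
  simpa using h.const_mul |x|

lemma bc_summable {r : ℝ} (hr : 0 < r) {x : ℝ} (hx : |x| < 1) :
    Summable (fun k => bc r k * x ^ k) := by
  set l : ℝ := (|x| + 1) / 2 with hl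
  have hxl : |x| < l := by rw [hl]; linarith
  have hl1 : l < 1 := by rw [hl]; linarith
  apply summable_of_ratio_norm_eventually_le hl1
  have hev : ∀ᶠ k : ℕ in atTop, |x| * ((r + k) / (k + 1)) ≤ l :=
    (bc_ratio_tendsto r x).eventually_le_const hxl
  filter_upwards [hev] with k hk
  have hbp : 0 < bc r k := bc_pos hr k
  have h2 : (0:ℝ) < (k:ℝ) + 1 := by positivity
  have h3 : (0:ℝ) < r + k := by positivity
  have e1 : ‖bc r (k+1) * x ^ (k+1)‖ = (|x| * ((r + k)/((k:ℝ)+1))) * (bc r k * |x| ^ k) := by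
    rw [bc_succ, Real.norm_eq_abs, abs_mul, abs_div, abs_mul, abs_pow,
      abs_of_pos hbp, abs_of_pos h3, abs_of_pos h2, pow_succ]
    push_cast
    ring
  have e2 : ‖bc r k * x ^ k‖ = bc r k * |x| ^ k := by
    rw [Real.norm_eq_abs, abs_mul, abs_pow, abs_of_pos hbp]
  rw [e1, e2]
  exact mul_le_mul_of_nonneg_right hk (by positivity)

lemma bc_shift_eq {r : ℝ} (hr : 0 < r) (z : ℝ) (k : ℕ) :
    bc r (k+1) * (((k:ℝ)+1) * z ^ k) = r * (bc (r+1) k * z ^ k) := by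
  linear_combination z ^ k * bc_succ_mul hr k

/-- The summable bound used for term-by-term differentiation. -/
lemma bc_deriv_summable {r : ℝ} (hr : 0 < r) {ρ : ℝ} (h0 : 0 ≤ ρ) (h1 : ρ < 1) :
    Summable (fun k : ℕ => bc r k * ((k:ℝ) * ρ ^ (k-1))) := by
  rw [← summable_nat_add_iff 1]
  have he : (fun k : ℕ => bc r (k+1) * ((((k:ℕ)+1 : ℕ):ℝ) * ρ ^ ((k+1)-1)))
      = fun k : ℕ => r * (bc (r+1) k * ρ ^ k) := by
    funext k
    push_cast
    simpa using bc_shift_eq hr ρ k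
  simpa only [he] using
    (bc_summable (by linarith : (0:ℝ) < r + 1) (by rwa [abs_of_nonneg h0])).mul_left r

lemma bc_tsum_deriv_eq {r : ℝ} (hr : 0 < r) {y : ℝ} (hy : |y| < 1) :
    HasDerivAt (fun z => ∑' k, bc r k * z ^ k) (∑' k, bc r k * ((k:ℝ) * y ^ (k-1))) y := by
  set ρ : ℝ := (|y| + 1) / 2 with hρ
  have hyρ : |y| < ρ := by rw [hρ]; linarith
  have hρ0 : 0 ≤ ρ := le_trans (abs_nonneg y) hyρ.le
  have hρ1 : ρ < 1 := by rw [hρ]; linarith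
  refine hasDerivAt_tsum_of_isPreconnected (𝕜 := ℝ) (F := ℝ)
    (u := fun k : ℕ => bc r k * ((k:ℝ) * ρ ^ (k-1)))
    (g := fun k z => bc r k * z ^ k)
    (g' := fun k z => bc r k * ((k:ℝ) * z ^ (k-1)))
    (t := Ioo (-ρ) ρ) (y₀ := 0)
    (bc_deriv_summable hr hρ0 hρ1)
    isOpen_Ioo (convex_Ioo _ _).isPreconnected
    (fun k z _ => by simpa using ((hasDerivAt_pow k z).const_mul (bc r k)))
    (fun k z hz => ?_) ?_ ?_ ?_
  · have hz' : |z| ≤ ρ := by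
      rw [abs_le]; exact ⟨hz.1.le, hz.2.le⟩
    have heq : ‖bc r k * ((k:ℝ) * z ^ (k-1))‖ = bc r k * ((k:ℝ) * |z| ^ (k-1)) := by
      rw [Real.norm_eq_abs, abs_mul, abs_mul, abs_pow, abs_of_pos (bc_pos hr k),
        Nat.abs_cast]
    rw [heq]
    have h1 : |z| ^ (k-1) ≤ ρ ^ (k-1) := pow_le_pow_left₀ (abs_nonneg z) hz' _
    have hb := (bc_pos hr k).le
    have hk : (0:ℝ) ≤ (k:ℝ) := Nat.cast_nonneg k
    exact mul_le_mul_of_nonneg_left (mul_le_mul_of_nonneg_left h1 hk) hb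
  · exact mem_Ioo.mpr ⟨neg_lt_zero.mpr (by positivity), by positivity⟩
  · exact bc_summable hr (by rw [abs_zero]; linarith [abs_nonneg y])
  · exact mem_Ioo.mpr ⟨neg_lt_of_abs_lt hyρ, lt_of_abs_lt hyρ⟩

lemma bc_deriv_abs_summable {r : ℝ} (hr : 0 < r) {y : ℝ} (hy : |y| < 1) :
    Summable (fun k : ℕ => bc r k * ((k:ℝ) * y ^ (k-1))) := by
  have h1 : Summable (fun k : ℕ => bc r k * ((k:ℝ) * |y| ^ (k-1))) :=
    bc_deriv_summable hr (abs_nonneg y) hy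
  refine h1.of_norm_bounded (fun k => ?_)
  rw [Real.norm_eq_abs, abs_mul, abs_mul, abs_pow, abs_of_pos (bc_pos hr k), Nat.abs_cast]

lemma bc_ode {r : ℝ} (hr : 0 < r) {y : ℝ} (hy : |y| < 1) :
    (1 - y) * (∑' k, bc r k * ((k:ℝ) * y ^ (k-1))) = r * ∑' k, bc r k * y ^ k := by
  have hs : Summable (fun k => bc r k * y ^ k) := bc_summable hr hy
  have hd : Summable (fun k : ℕ => bc r k * ((k:ℝ) * y ^ (k-1))) := bc_deriv_abs_summable hr hy
  have e2 : ∀ k : ℕ, bc r (k+1) * ((((k+1):ℕ):ℝ) * y ^ ((k+1)-1))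
      = r * (bc r k * y ^ k) + y * (bc r k * ((k:ℝ) * y ^ (k-1))) := by
    intro k
    rw [Nat.succ_sub_one]
    push_cast
    have h1 : bc r (k+1) * ((k:ℝ)+1) = bc r k * (r + k) := by
      have h2 : ((k:ℝ)) + 1 ≠ 0 := by positivity
      rw [bc_succ]
      field_simp
    have h3 : y * ((k:ℝ) * y ^ (k-1)) = (k:ℝ) * y ^ k := by
      cases k with
      | zero => simp
      | succ m => rw [Nat.succ_sub_one, pow_succ]; push_cast; ring
    calc bc r (k+1) * (((k:ℝ)+1) * y ^ k) = (bc r (k+1) * ((k:ℝ)+1)) * y ^ k := by ring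
      _ = bc r k * (r + k) * y ^ k := by rw [h1]
      _ = r * (bc r k * y ^ k) + (k:ℝ) * y ^ k * bc r k := by ring
      _ = r * (bc r k * y ^ k) + y * (bc r k * ((k:ℝ) * y ^ (k-1))) := by
          rw [← h3]; ring
  have key : (∑' k, bc r k * ((k:ℝ) * y ^ (k-1)))
      = r * (∑' k, bc r k * y ^ k) + y * (∑' k, bc r k * ((k:ℝ) * y ^ (k-1))) := by
    calc (∑' k, bc r k * ((k:ℝ) * y ^ (k-1)))
        = bc r 0 * (((0:ℕ):ℝ) * y ^ (0-1))
            + ∑' k, bc r (k+1) * ((((k+1):ℕ):ℝ) * y ^ ((k+1)-1)) := hd.tsum_eq_zero_add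
      _ = ∑' k, bc r (k+1) * ((((k+1):ℕ):ℝ) * y ^ ((k+1)-1)) := by norm_num
      _ = ∑' k, (r * (bc r k * y ^ k) + y * (bc r k * ((k:ℝ) * y ^ (k-1)))) := tsum_congr e2
      _ = r * (∑' k, bc r k * y ^ k) + y * (∑' k, bc r k * ((k:ℝ) * y ^ (k-1))) := by
          rw [Summable.tsum_add (hs.mul_left r) (hd.mul_left y), tsum_mul_left, tsum_mul_left]
  linear_combination key

/-- The binomial series: for `0 ≤ x < 1` and `r > 0`,
`∑ k, bc r k x^k = (1 - x) ^ (-r)`. -/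
lemma bc_hasSum {r : ℝ} (hr : 0 < r) {x : ℝ} (hx0 : 0 ≤ x) (hx1 : x < 1) :
    HasSum (fun k => bc r k * x ^ k) ((1 - x) ^ (-r) : ℝ) := by
  have hsum : Summable (fun k => bc r k * x ^ k) :=
    bc_summable hr (by rwa [abs_of_nonneg hx0])
  have hderiv : ∀ z, |z| < 1 →
      HasDerivAt (fun w => (∑' k, bc r k * w ^ k) * (1 - w) ^ (r:ℝ)) 0 z := by
    intro z hz
    have h1z : (0:ℝ) < 1 - z := by
      have := lt_of_abs_lt hz; linarith
    have hd1 : HasDerivAt (fun w => ∑' k, bc r k * w ^ k)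
        (∑' k, bc r k * ((k:ℝ) * z ^ (k-1))) z := bc_tsum_deriv_eq hr hz
    have hd2 : HasDerivAt (fun w => (1 - w) ^ (r:ℝ)) (-1 * r * (1 - z) ^ (r - 1)) z := by
      have hbase : HasDerivAt (fun w : ℝ => 1 - w) (-1) z := by
        simpa using (hasDerivAt_id z).const_sub 1
      exact hbase.rpow_const (Or.inl (ne_of_gt h1z))
    have hmul := hd1.mul hd2
    have hode := bc_ode hr hz
    have hpow : (1 - z) ^ (r:ℝ) = (1 - z) ^ (r-1) * (1 - z) := by
      rw [← Real.rpow_add_one (ne_of_gt h1z) (r-1)]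
      norm_num
    have h0 : (∑' k, bc r k * ((k:ℝ) * z ^ (k-1))) * (1 - z) ^ (r:ℝ)
        + (∑' k, bc r k * z ^ k) * (-1 * r * (1 - z) ^ (r - 1)) = 0 := by
      rw [hpow]
      linear_combination ((1 - z) ^ (r-1)) * hode
    exact h0 ▸ hmul
  have habs : ∀ z ∈ Icc (0:ℝ) x, |z| < 1 := by
    intro z hz
    rw [abs_of_nonneg hz.1]
    exact lt_of_le_of_lt hz.2 hx1
  have hconst : (∑' k, bc r k * x ^ k) * (1 - x) ^ (r:ℝ)
      = (∑' k, bc r k * (0:ℝ) ^ k) * (1 - 0) ^ (r:ℝ) := by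
    exact constant_of_has_deriv_right_zero
      (fun z hz => ((hderiv z (habs z hz)).continuousAt).continuousWithinAt)
      (fun z hz => ((hderiv z (habs z ⟨hz.1, hz.2.le⟩)).hasDerivWithinAt))
      x ⟨hx0, le_refl x⟩
  have hz0 : (∑' k, bc r k * (0:ℝ) ^ k) = 1 := by
    rw [tsum_eq_single 0 (fun k hk => by
      rcases Nat.exists_eq_succ_of_ne_zero hk with ⟨m, rfl⟩
      simp [zero_pow])]
    simp [bc_zero]
  have h2 : (∑' k, bc r k * x ^ k) * (1 - x) ^ (r:ℝ) = 1 := by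
    rw [hconst, hz0]; norm_num
  have h1x : (0:ℝ) < 1 - x := by linarith
  have h3 : (1 - x) ^ (r:ℝ) ≠ 0 := ne_of_gt (Real.rpow_pos_of_pos h1x r)
  have hgx : (∑' k, bc r k * x ^ k) = (1 - x) ^ (-r) := by
    rw [Real.rpow_neg h1x.le, ← one_div]
    exact (eq_div_iff h3).mpr h2
  exact hgx ▸ hsum.hasSum

/-- Sum of the derivative series `k * bc r k * ρ^(k-1)`. -/
lemma bc_deriv_hasSum {r : ℝ} (hr : 0 < r) {ρ : ℝ} (h0 : 0 ≤ ρ) (h1 : ρ < 1) :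
    HasSum (fun k : ℕ => bc r k * ((k:ℝ) * ρ ^ (k-1))) (r * (1 - ρ) ^ (-(r+1))) := by
  have hbase : HasSum (fun k => bc (r+1) k * ρ ^ k) ((1 - ρ) ^ (-(r+1))) :=
    bc_hasSum (by linarith) h0 h1
  have h2 := hbase.mul_left r
  have he : (fun k : ℕ => bc r (k+1) * ((((k:ℕ)+1 : ℕ):ℝ) * ρ ^ ((k+1)-1)))
      = fun k : ℕ => r * (bc (r+1) k * ρ ^ k) := by
    funext k
    push_cast
    simpa using bc_shift_eq hr ρ k
  have hshift : HasSum (fun k : ℕ => bc r (k+1) * ((((k:ℕ)+1 : ℕ):ℝ) * ρ ^ ((k+1)-1)))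
      (r * (1 - ρ) ^ (-(r+1))) := he ▸ h2
  have := (hasSum_nat_add_iff (f := fun k : ℕ => bc r k * ((k:ℝ) * ρ ^ (k-1))) 1).mp hshift
  simpa using this

end BinomialScalar

open Matrix Filter
open scoped ComplexOrder Matrix.Norms.L2Operator



end AuxScalar

open scoped Matrix.Norms.L2Operator

noncomputable section MatrixAux

namespace StmtAux

variable {n : ℕ}

local notation "Mat" => Matrix (Fin n) (Fin n) ℂ

lemma rsmul_eq (c : ℝ) (X : Mat) : c • X = ((c:ℂ)) • X := by
  ext i j
  simp [Matrix.smul_apply, Complex.real_smul]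

lemma dot_star_self_eq (x : Fin n → ℂ) :
    star x ⬝ᵥ x = ((∑ i, ‖x i‖^2 : ℝ) : ℂ) := by
  simp only [dotProduct, Pi.star_apply]
  push_cast
  refine Finset.sum_congr rfl (fun i _ => ?_)
  rw [Complex.star_def, ← Complex.normSq_eq_conj_mul_self, Complex.normSq_eq_norm_sq,
    Complex.ofReal_pow]

lemma euclid_norm_sq (x : EuclideanSpace ℂ (Fin n)) :
    ‖x‖^2 = ∑ i, ‖x i‖^2 := by
  rw [EuclideanSpace.norm_eq, Real.sq_sqrt (by positivity)]

/-- `Fin n → ℂ` viewed as a Euclidean space element. -/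
def toE (x : Fin n → ℂ) : EuclideanSpace ℂ (Fin n) := WithLp.toLp 2 x

@[simp] lemma toE_apply (x : Fin n → ℂ) (i : Fin n) : toE x i = x i := rfl

lemma euclid_norm_sq' (x : Fin n → ℂ) : ‖toE x‖^2 = ∑ i, ‖x i‖^2 := euclid_norm_sq _

lemma clm_apply_eq (X : Mat) (x : Fin n → ℂ) :
    Matrix.toEuclideanCLM (𝕜 := ℂ) X (toE x) = toE (X *ᵥ x) := Matrix.toEuclideanCLM_toLp _ _

/-- Operator norm bound from quadratic forms. -/
lemma norm_le_of_dot (X : Mat) (m : ℝ) (hm : 0 ≤ m)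
    (h : ∀ x : Fin n → ℂ, (∑ i, ‖(X *ᵥ x) i‖^2 : ℝ) ≤ m^2 * ∑ i, ‖x i‖^2) :
    ‖X‖ ≤ m := by
  refine ContinuousLinearMap.opNorm_le_bound _ hm (fun x => ?_)
  show ‖Matrix.toEuclideanCLM (𝕜 := ℂ) X (toE x)‖ ≤ m * ‖toE x‖
  have h1 : ‖Matrix.toEuclideanCLM (𝕜 := ℂ) X (toE x)‖^2 = ∑ i, ‖(X *ᵥ x) i‖^2 := by
    rw [clm_apply_eq]; exact euclid_norm_sq' _
  have h2 : (∑ i, ‖(X *ᵥ (x : Fin n → ℂ)) i‖^2 : ℝ) ≤ m^2 * ∑ i, ‖(x : Fin n → ℂ) i‖^2 := h _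
  have h3 : ‖toE x‖^2 = ∑ i, ‖(x : Fin n → ℂ) i‖^2 := euclid_norm_sq' _
  nlinarith [norm_nonneg (Matrix.toEuclideanCLM (𝕜 := ℂ) X (toE x)), norm_nonneg (toE x),
    mul_nonneg hm (norm_nonneg (toE x))]

/-- Quadratic form bound from the operator norm. -/
lemma dot_mulVec_le (X : Mat) (x : Fin n → ℂ) :
    (∑ i, ‖(X *ᵥ x) i‖^2 : ℝ) ≤ ‖X‖^2 * ∑ i, ‖x i‖^2 := by
  have h := (Matrix.toEuclideanCLM (𝕜 := ℂ) X).le_opNorm (toE x)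
  have h1 : ‖Matrix.toEuclideanCLM (𝕜 := ℂ) X (toE x)‖^2 = ∑ i, ‖(X *ᵥ x) i‖^2 := by
    rw [clm_apply_eq]; exact euclid_norm_sq' _
  have h3 : ‖toE x‖^2 = ∑ i, ‖x i‖^2 := euclid_norm_sq' _
  have h4 : ‖Matrix.toEuclideanCLM (𝕜 := ℂ) X‖ = ‖X‖ := rfl
  rw [h4] at h
  nlinarith [norm_nonneg (toE x), norm_nonneg X,
    norm_nonneg (Matrix.toEuclideanCLM (𝕜 := ℂ) X (toE x))]

/-- Cauchy–Schwarz for the quadratic form. -/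
lemma dot_quad_abs_le (X : Mat) (x : Fin n → ℂ) :
    ‖star x ⬝ᵥ (X *ᵥ x)‖ ≤ ‖X‖ * ∑ i, ‖x i‖^2 := by
  have h1 : (inner ℂ (toE x) (Matrix.toEuclideanCLM (𝕜 := ℂ) X (toE x)) : ℂ)
      = star x ⬝ᵥ (X *ᵥ x) := by
    rw [clm_apply_eq, EuclideanSpace.inner_eq_star_dotProduct, dotProduct_comm]; rfl
  rw [← h1]
  have h2 := norm_inner_le_norm (𝕜 := ℂ) (toE x) (Matrix.toEuclideanCLM (𝕜 := ℂ) X (toE x))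
  have h3 := (Matrix.toEuclideanCLM (𝕜 := ℂ) X).le_opNorm (toE x)
  have h4 : ‖toE x‖^2 = ∑ i, ‖x i‖^2 := euclid_norm_sq' _
  have h5 : ‖Matrix.toEuclideanCLM (𝕜 := ℂ) X‖ = ‖X‖ := rfl
  rw [h5] at h3
  calc ‖(inner ℂ (toE x) (Matrix.toEuclideanCLM (𝕜 := ℂ) X (toE x)) : ℂ)‖
      ≤ ‖toE x‖ * ‖Matrix.toEuclideanCLM (𝕜 := ℂ) X (toE x)‖ := h2
    _ ≤ ‖toE x‖ * (‖X‖ * ‖toE x‖) := mul_le_mul_of_nonneg_left h3 (norm_nonneg _)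
    _ = ‖X‖ * ∑ i, ‖x i‖^2 := by rw [← h4]; ring


section Mfun

variable {Y : Matrix (Fin n) (Fin n) ℂ}

/-- Function applied to a Hermitian matrix via the spectral decomposition. -/
noncomputable def mfun (hY : Y.IsHermitian) (f : ℝ → ℝ) : Mat :=
  (hY.eigenvectorUnitary : Mat) *
    Matrix.diagonal (fun i => ((f (hY.eigenvalues i) : ℝ) : ℂ)) *
    (hY.eigenvectorUnitary : Mat)ᴴ

lemma hrpow_eq (hY : Y.IsHermitian) (r : ℝ) : hrpow Y r = mfun hY (fun x => x ^ r) := dif_pos hY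

lemma unitary_mul (hY : Y.IsHermitian) (X : Mat) :
    (hY.eigenvectorUnitary : Mat)ᴴ * ((hY.eigenvectorUnitary : Mat) * X) = X := by
  rw [← mul_assoc, ← Matrix.star_eq_conjTranspose, Unitary.star_mul_self_of_mem
    hY.eigenvectorUnitary.2, one_mul]

lemma mfun_mul (hY : Y.IsHermitian) (f g : ℝ → ℝ) : mfun hY f * mfun hY g = mfun hY (fun x => f x * g x) := by
  unfold mfun
  set U : Mat := (hY.eigenvectorUnitary : Mat)
  set D1 : Mat := Matrix.diagonal (fun i => ((f (hY.eigenvalues i) : ℝ) : ℂ))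
  set D2 : Mat := Matrix.diagonal (fun i => ((g (hY.eigenvalues i) : ℝ) : ℂ))
  have h1 : U * D1 * Uᴴ * (U * D2 * Uᴴ) = U * (D1 * (Uᴴ * (U * (D2 * Uᴴ)))) := by
    simp only [mul_assoc]
  rw [h1, unitary_mul hY, show D1 * (D2 * Uᴴ) = (D1 * D2) * Uᴴ from (mul_assoc _ _ _).symm]
  have h2 : D1 * D2 = Matrix.diagonal (fun i => ((f (hY.eigenvalues i) * g (hY.eigenvalues i) : ℝ) : ℂ)) := by
    rw [Matrix.diagonal_mul_diagonal]
    congr 1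
    funext i
    push_cast
    ring
  rw [h2, ← mul_assoc]

lemma mfun_one (hY : Y.IsHermitian) : mfun hY (fun _ => (1:ℝ)) = 1 := by
  unfold mfun
  simp only [Complex.ofReal_one, Matrix.diagonal_one, mul_one]
  rw [← Matrix.star_eq_conjTranspose, Unitary.mul_star_self_of_mem hY.eigenvectorUnitary.2]

lemma mfun_add (hY : Y.IsHermitian) (f g : ℝ → ℝ) : mfun hY f + mfun hY g = mfun hY (fun x => f x + g x) := by
  unfold mfun
  rw [← Matrix.add_mul, ← Matrix.mul_add, Matrix.diagonal_add]
  congr 2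
  funext i
  simp only [Pi.add_apply]
  push_cast
  ring

lemma mfun_sub (hY : Y.IsHermitian) (f g : ℝ → ℝ) : mfun hY f - mfun hY g = mfun hY (fun x => f x - g x) := by
  unfold mfun
  rw [← Matrix.sub_mul, ← Matrix.mul_sub, Matrix.diagonal_sub]
  congr 2
  funext i
  simp only [Pi.sub_apply]
  push_cast
  ring

lemma mfun_smul (hY : Y.IsHermitian) (f : ℝ → ℝ) (c : ℝ) : c • mfun hY f = mfun hY (fun x => c * f x) := by
  unfold mfun
  rw [rsmul_eq]
  have h1 : ((c:ℂ)) • ((hY.eigenvectorUnitary : Mat) *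
      Matrix.diagonal (fun i => ((f (hY.eigenvalues i) : ℝ) : ℂ)) *
      (hY.eigenvectorUnitary : Mat)ᴴ)
      = (hY.eigenvectorUnitary : Mat) *
        (((c:ℂ)) • Matrix.diagonal (fun i => ((f (hY.eigenvalues i) : ℝ) : ℂ))) *
        (hY.eigenvectorUnitary : Mat)ᴴ := by
    rw [mul_smul_comm, smul_mul_assoc]
  have h2 : ((c:ℂ)) • Matrix.diagonal (fun i => ((f (hY.eigenvalues i) : ℝ) : ℂ))
      = Matrix.diagonal (fun i => ((c * f (hY.eigenvalues i) : ℝ) : ℂ)) := by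
    ext i j
    rcases eq_or_ne i j with rfl | hij
    · simp only [Matrix.smul_apply, Matrix.diagonal_apply_eq, smul_eq_mul]
      push_cast
      ring
    · simp only [Matrix.smul_apply, Matrix.diagonal_apply_ne _ hij, smul_eq_mul, mul_zero]
  rw [h1, h2]

lemma mfun_id (hY : Y.IsHermitian) : mfun hY (fun x => x) = Y := by
  conv_rhs => rw [hY.spectral_theorem]
  unfold mfun
  rw [Unitary.conjStarAlgAut_apply, Matrix.star_eq_conjTranspose]
  rfl

lemma mfun_isHermitian (hY : Y.IsHermitian) (f : ℝ → ℝ) : (mfun hY f).IsHermitian := by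
  unfold mfun
  unfold Matrix.IsHermitian
  rw [Matrix.conjTranspose_mul, Matrix.conjTranspose_mul, Matrix.conjTranspose_conjTranspose,
    Matrix.diagonal_conjTranspose]
  have : star (fun i => ((f (hY.eigenvalues i) : ℝ) : ℂ)) = fun i => ((f (hY.eigenvalues i) : ℝ) : ℂ) := by
    funext i
    simp [Complex.star_def, Complex.conj_ofReal]
  rw [this, mul_assoc]

lemma mfun_posSemidef (hY : Y.IsHermitian) (f : ℝ → ℝ) (h : ∀ i, 0 ≤ f (hY.eigenvalues i)) : (mfun hY f).PosSemidef := by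
  unfold mfun
  exact Matrix.PosSemidef.mul_mul_conjTranspose_same
    (Matrix.posSemidef_diagonal_iff.mpr (fun i => by
      rw [Complex.zero_le_real]
      exact h i)) _

lemma norm_one_le : ‖(1 : Mat)‖ ≤ 1 := by
  have h : Matrix.toEuclideanCLM (𝕜 := ℂ) (1 : Mat) = 1 := map_one _
  show ‖Matrix.toEuclideanCLM (𝕜 := ℂ) (1 : Mat)‖ ≤ 1
  rw [h]
  exact ContinuousLinearMap.norm_id_le

lemma norm_unitary (hY : Y.IsHermitian) : ‖(hY.eigenvectorUnitary : Mat)‖ ≤ 1 := by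
  refine norm_le_of_dot _ _ zero_le_one (fun x => ?_)
  have h1 : star ((hY.eigenvectorUnitary : Mat) *ᵥ x) ⬝ᵥ ((hY.eigenvectorUnitary : Mat) *ᵥ x)
      = star x ⬝ᵥ x := by
    rw [Matrix.star_mulVec, Matrix.dotProduct_mulVec, Matrix.vecMul_vecMul,
      ← Matrix.star_eq_conjTranspose, Unitary.star_mul_self_of_mem hY.eigenvectorUnitary.2]
    simp [Matrix.vecMul_one]
  have h2 := congrArg Complex.re ((dot_star_self_eq _).symm.trans (h1.trans (dot_star_self_eq x)))
  simp only [Complex.ofReal_re] at h2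
  rw [h2]
  nlinarith [Finset.sum_nonneg (fun i (_ : i ∈ Finset.univ) => sq_nonneg ‖x i‖)]

lemma norm_unitary_conj (hY : Y.IsHermitian) : ‖(hY.eigenvectorUnitary : Mat)ᴴ‖ ≤ 1 := by
  rw [Matrix.l2_opNorm_conjTranspose]
  exact norm_unitary hY

lemma norm_diagonal_le (d : Fin n → ℂ) (m : ℝ) (hm : 0 ≤ m) (h : ∀ i, ‖d i‖ ≤ m) :
    ‖Matrix.diagonal d‖ ≤ m := by
  refine norm_le_of_dot _ _ hm (fun x => ?_)
  have h1 : ∀ i, (Matrix.diagonal d *ᵥ x) i = d i * x i := by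
    intro i
    simp [Matrix.mulVec_diagonal]
  calc (∑ i, ‖(Matrix.diagonal d *ᵥ x) i‖^2 : ℝ) = ∑ i, ‖d i‖^2 * ‖x i‖^2 := by
        refine Finset.sum_congr rfl (fun i _ => ?_)
        rw [h1 i, norm_mul, mul_pow]
    _ ≤ ∑ i, m^2 * ‖x i‖^2 := by
        refine Finset.sum_le_sum (fun i _ => ?_)
        have h2 : ‖d i‖^2 ≤ m^2 := by nlinarith [norm_nonneg (d i), h i]
        exact mul_le_mul_of_nonneg_right h2 (sq_nonneg _)
    _ = m^2 * ∑ i, ‖x i‖^2 := by rw [Finset.mul_sum]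

lemma mfun_norm_le (hY : Y.IsHermitian) (f : ℝ → ℝ) (m : ℝ) (hm : 0 ≤ m) (h : ∀ i, |f (hY.eigenvalues i)| ≤ m) :
    ‖mfun hY f‖ ≤ m := by
  unfold mfun
  set U : Mat := (hY.eigenvectorUnitary : Mat)
  set D : Mat := Matrix.diagonal (fun i => ((f (hY.eigenvalues i) : ℝ) : ℂ))
  have hD : ‖D‖ ≤ m := by
    refine norm_diagonal_le _ m hm (fun i => ?_)
    rw [Complex.norm_real]
    exact h i
  have hU := norm_unitary hY
  have hUc := norm_unitary_conj hY
  calc ‖U * D * Uᴴ‖ ≤ ‖U * D‖ * ‖Uᴴ‖ := norm_mul_le _ _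
    _ ≤ (‖U‖ * ‖D‖) * ‖Uᴴ‖ := by
        refine mul_le_mul_of_nonneg_right (norm_mul_le _ _) (norm_nonneg _)
    _ ≤ (1 * m) * 1 := by
        have h5 : ‖U‖ * ‖D‖ ≤ 1 * m := mul_le_mul hU hD (norm_nonneg _) zero_le_one
        exact mul_le_mul h5 hUc (norm_nonneg _) (by linarith)
    _ = m := by ring

lemma mfun_pow (hY : Y.IsHermitian) (f : ℝ → ℝ) (k : ℕ) : (mfun hY f) ^ k = mfun hY (fun x => (f x) ^ k) := by
  induction k with
  | zero => simp only [pow_zero]; exact (mfun_one hY).symm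
  | succ k ih =>
    have he : (fun x => (f x) ^ (k+1)) = fun x => (f x) ^ k * (f x) := by
      funext x; rw [pow_succ]
    rw [he, pow_succ, ih, mfun_mul]

lemma mfun_finsum (hY : Y.IsHermitian) (g : ℕ → ℝ → ℝ) (N : ℕ) :
    ∑ k ∈ Finset.range N, mfun hY (g k) = mfun hY (fun x => ∑ k ∈ Finset.range N, g k x) := by
  induction N with
  | zero =>
    simp only [Finset.range_zero, Finset.sum_empty]
    have h0 : mfun hY (fun _ => (0:ℝ)) = (0:ℝ) • mfun hY (fun _ => (1:ℝ)) := by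
      rw [mfun_smul hY]
      congr 1
      funext x
      ring
    rw [h0, zero_smul]
  | succ N ih =>
    have he : (fun x => (∑ k ∈ Finset.range N, g k x) + g N x)
        = fun x => ∑ k ∈ Finset.range (N+1), g k x := by
      funext x
      rw [Finset.sum_range_succ]
    rw [Finset.sum_range_succ, ih, mfun_add hY, he]

end Mfun

section Eigen

variable {Y : Matrix (Fin n) (Fin n) ℂ}

/-- The i-th eigenvector as a plain vector. -/
noncomputable def evec (hY : Y.IsHermitian) (i : Fin n) : Fin n → ℂ :=
  (WithLp.equiv 2 (Fin n → ℂ)) (hY.eigenvectorBasis i)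

lemma evec_sum_sq (hY : Y.IsHermitian) (i : Fin n) :
    ∑ j, ‖evec hY i j‖^2 = 1 := by
  have h1 : ‖hY.eigenvectorBasis i‖ = 1 := hY.eigenvectorBasis.orthonormal.1 i
  have h2 : ‖hY.eigenvectorBasis i‖^2 = ∑ j, ‖evec hY i j‖^2 := euclid_norm_sq _
  rw [h1] at h2
  rw [← h2]
  norm_num

lemma evec_unit (hY : Y.IsHermitian) (i : Fin n) :
    star (evec hY i) ⬝ᵥ (evec hY i) = 1 := by
  rw [dot_star_self_eq, evec_sum_sq]
  norm_num

lemma mulVec_evec (hY : Y.IsHermitian) (i : Fin n) :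
    Y *ᵥ (evec hY i) = hY.eigenvalues i • evec hY i :=
  hY.mulVec_eigenvectorBasis i

lemma eigenvalues_eq' (hY : Y.IsHermitian) (i : Fin n) :
    hY.eigenvalues i = Complex.re (star (evec hY i) ⬝ᵥ (Y *ᵥ evec hY i)) :=
  hY.eigenvalues_eq i

lemma dot_smul_one (γ : ℝ) (x : Fin n → ℂ) :
    star x ⬝ᵥ ((γ • (1:Mat)) *ᵥ x) = (γ:ℂ) * (star x ⬝ᵥ x) := by
  rw [rsmul_eq, Matrix.smul_mulVec, Matrix.one_mulVec, dotProduct_smul,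
    smul_eq_mul]

lemma psd_re_quad {M : Mat} (hM : M.PosSemidef) (x : Fin n → ℂ) :
    0 ≤ Complex.re (star x ⬝ᵥ (M *ᵥ x)) :=
  hM.re_dotProduct_nonneg x

lemma eig_ge_of_psd {γ : ℝ} (hY : Y.IsHermitian) (h : (Y - γ • 1).PosSemidef) (i : Fin n) :
    γ ≤ hY.eigenvalues i := by
  have h2 := psd_re_quad h (evec hY i)
  rw [Matrix.sub_mulVec, dotProduct_sub, dot_smul_one, evec_unit, mul_one] at h2
  rw [Complex.sub_re, Complex.ofReal_re] at h2
  rw [eigenvalues_eq' hY i]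
  linarith

lemma mfun_const (hY : Y.IsHermitian) (γ : ℝ) : mfun hY (fun _ => γ) = γ • 1 := by
  have h1 : mfun hY (fun _ => γ) = γ • mfun hY (fun _ => (1:ℝ)) := by
    rw [mfun_smul hY]
    congr 1
    funext x
    ring
  rw [h1, mfun_one]

lemma psd_of_eig_ge (hY : Y.IsHermitian) {γ : ℝ} (h : ∀ i, γ ≤ hY.eigenvalues i) :
    (Y - γ • 1).PosSemidef := by
  have h1 : Y - γ • (1:Mat) = mfun hY (fun x => x - γ) := by
    conv_lhs => rw [← mfun_id hY, ← mfun_const hY γ]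
    rw [mfun_sub hY]
  rw [h1]
  exact mfun_posSemidef hY _ (fun i => by linarith [h i])

lemma psd_of_eig_le (hY : Y.IsHermitian) {γ : ℝ} (h : ∀ i, hY.eigenvalues i ≤ γ) :
    (γ • (1:Mat) - Y).PosSemidef := by
  have h1 : γ • (1:Mat) - Y = mfun hY (fun x => γ - x) := by
    conv_lhs => rw [← mfun_id hY, ← mfun_const hY γ]
    rw [mfun_sub hY]
  rw [h1]
  exact mfun_posSemidef hY _ (fun i => by linarith [h i])

lemma eig_le_norm_of_psd_sub {Q : Mat} (hY : Y.IsHermitian) (h : (Q - Y).PosSemidef)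
    (i : Fin n) : hY.eigenvalues i ≤ ‖Q‖ := by
  have h2 := psd_re_quad h (evec hY i)
  rw [Matrix.sub_mulVec, dotProduct_sub, Complex.sub_re] at h2
  have h3 : hY.eigenvalues i ≤ Complex.re (star (evec hY i) ⬝ᵥ (Q *ᵥ evec hY i)) := by
    rw [eigenvalues_eq' hY i]
    linarith
  refine le_trans h3 (le_trans (Complex.re_le_norm _) ?_)
  have h4 := dot_quad_abs_le Q (evec hY i)
  rw [evec_sum_sq hY i, mul_one] at h4
  exact h4

lemma herm_smul_one (γ : ℝ) : (γ • (1:Mat)).IsHermitian := by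
  rw [rsmul_eq]
  unfold Matrix.IsHermitian
  rw [Matrix.conjTranspose_smul, Matrix.conjTranspose_one]
  congr 1
  simp [Complex.star_def, Complex.conj_ofReal]

lemma herm_of_psd_sub {γ : ℝ} (h : (Y - γ • 1).PosSemidef) : Y.IsHermitian := by
  have h1 : Y = (Y - γ • 1) + γ • 1 := by abel
  rw [h1]
  exact h.isHermitian.add (herm_smul_one γ)

lemma posDef_of_psd_sub {β : ℝ} (hβ : 0 < β) (h : (Y - β • 1).PosSemidef) : Y.PosDef := by
  refine Matrix.PosDef.of_dotProduct_mulVec_pos (herm_of_psd_sub h) (fun x hx => ?_)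
  have h2 := h.dotProduct_mulVec_nonneg x
  rw [Matrix.sub_mulVec, dotProduct_sub, dot_smul_one] at h2
  have h3 : star x ⬝ᵥ (Y *ᵥ x)
      = (star x ⬝ᵥ (Y *ᵥ x) - (β:ℂ) * (star x ⬝ᵥ x)) + (β:ℂ) * (star x ⬝ᵥ x) := by ring
  rw [h3]
  refine add_pos_of_nonneg_of_pos h2 ?_
  have h4 : (0:ℂ) < (β:ℂ) := by
    rw [Complex.zero_lt_real]
    exact hβ
  exact mul_pos h4 (Matrix.dotProduct_star_self_pos_iff.mpr hx)

lemma lamMin_eq (hY : Y.IsHermitian) : lamMin Y = ⨅ i, hY.eigenvalues i := by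
  rw [lamMin, dif_pos hY]

lemma lamMin_le_eig (hY : Y.IsHermitian) (i : Fin n) : lamMin Y ≤ hY.eigenvalues i := by
  rw [lamMin_eq hY]
  exact ciInf_le (Set.Finite.bddBelow (Set.finite_range _)) i

lemma psd_sub_lamMin (hY : Y.IsHermitian) : (Y - lamMin Y • 1).PosSemidef :=
  psd_of_eig_ge hY (lamMin_le_eig hY)

lemma exists_eig_lamMin (hn : 0 < n) (hY : Y.IsHermitian) :
    ∃ i, hY.eigenvalues i = lamMin Y := by
  have : Nonempty (Fin n) := ⟨⟨0, hn⟩⟩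
  obtain ⟨i0, hi0⟩ := Finite.exists_min hY.eigenvalues
  refine ⟨i0, le_antisymm ?_ (lamMin_le_eig hY i0)⟩
  rw [lamMin_eq hY]
  exact le_ciInf hi0

end Eigen

end StmtAux

end MatrixAux

noncomputable section LipSection

namespace StmtAux

variable {n : ℕ}

local notation "Mat" => Matrix (Fin n) (Fin n) ℂ

lemma norm_pow_le_rho {W : Mat} {ρ : ℝ} (hW : ‖W‖ ≤ ρ) (hρ : 0 ≤ ρ) (k : ℕ) :
    ‖W ^ k‖ ≤ ρ ^ k := by
  induction k with
  | zero => simpa using norm_one_le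
  | succ k ih =>
    rw [pow_succ, pow_succ]
    calc ‖W ^ k * W‖ ≤ ‖W ^ k‖ * ‖W‖ := norm_mul_le _ _
      _ ≤ ρ ^ k * ρ := mul_le_mul ih hW (norm_nonneg _) (by positivity)

lemma norm_pow_sub_pow {W V : Mat} {ρ : ℝ} (hW : ‖W‖ ≤ ρ) (hV : ‖V‖ ≤ ρ) (hρ : 0 ≤ ρ) (k : ℕ) :
    ‖W ^ k - V ^ k‖ ≤ k * ρ ^ (k-1) * ‖W - V‖ := by
  induction k with
  | zero => simp
  | succ k ih =>
    have key : W ^ (k+1) - V ^ (k+1) = W ^ k * (W - V) + (W ^ k - V ^ k) * V := by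
      noncomm_ring
    have h1 : ‖W ^ (k+1) - V ^ (k+1)‖ ≤ ‖W ^ k * (W - V)‖ + ‖(W ^ k - V ^ k) * V‖ :=
      key ▸ norm_add_le _ _
    have h2 : ‖W ^ k * (W - V)‖ ≤ ρ ^ k * ‖W - V‖ :=
      le_trans (norm_mul_le _ _)
        (mul_le_mul_of_nonneg_right (norm_pow_le_rho hW hρ k) (norm_nonneg _))
    have h3 : ‖(W ^ k - V ^ k) * V‖ ≤ (k * ρ ^ (k-1) * ‖W - V‖) * ρ := by
      calc ‖(W ^ k - V ^ k) * V‖ ≤ ‖W ^ k - V ^ k‖ * ‖V‖ := norm_mul_le _ _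
        _ ≤ (k * ρ ^ (k-1) * ‖W - V‖) * ρ := by
            refine mul_le_mul ih hV (norm_nonneg _) ?_
            positivity
    have h4 : (k : ℝ) * ρ ^ (k-1) * ‖W - V‖ * ρ ≤ k * ρ ^ k * ‖W - V‖ := by
      cases k with
      | zero => simp
      | succ m =>
        refine le_of_eq ?_
        have hpp : ρ ^ (m+1-1) * ρ = ρ ^ (m+1) := by
          rw [Nat.add_sub_cancel, pow_succ]
        calc ((m+1 : ℕ) : ℝ) * ρ ^ (m+1-1) * ‖W - V‖ * ρ
            = ((m+1 : ℕ) : ℝ) * (ρ ^ (m+1-1) * ρ) * ‖W - V‖ := by ring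
          _ = ((m+1 : ℕ) : ℝ) * ρ ^ (m+1) * ‖W - V‖ := by rw [hpp]
    have goal_eq : ((k+1 : ℕ):ℝ) * ρ ^ (k+1-1) * ‖W - V‖ = ((k:ℝ)+1) * ρ ^ k * ‖W - V‖ := by
      rw [Nat.add_sub_cancel]
      push_cast
      ring
    rw [goal_eq]
    linarith [h1, h2, h3, h4]

lemma rpow_neg_anti {β lam r : ℝ} (hβ : 0 < β) (h : β ≤ lam) (hr : 0 < r) :
    lam ^ (-r) ≤ β ^ (-r) := by
  have hlam : 0 < lam := lt_of_lt_of_le hβ h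
  rw [Real.rpow_neg hβ.le, Real.rpow_neg hlam.le]
  have h1 : β ^ r ≤ lam ^ r := Real.rpow_le_rpow hβ.le h hr.le
  have h2 : 0 < β ^ r := Real.rpow_pos_of_pos hβ r
  exact inv_anti₀ h2 h1

lemma hrpow_herm {Y : Mat} (hY : Y.IsHermitian) (r : ℝ) : (hrpow Y r).IsHermitian := by
  rw [hrpow_eq hY]
  exact mfun_isHermitian hY _

lemma hrpow_psd {Y : Mat} (hY : Y.IsHermitian) (h : ∀ i, 0 ≤ hY.eigenvalues i) (r : ℝ) :
    (hrpow Y r).PosSemidef := by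
  rw [hrpow_eq hY]
  exact mfun_posSemidef hY _ (fun i => Real.rpow_nonneg (h i) r)

lemma hrpow_le_smul_one {Y : Mat} {β r : ℝ} (hβ : 0 < β) (hr : 0 < r)
    (hY : Y.IsHermitian) (h : ∀ i, β ≤ hY.eigenvalues i) :
    ((β ^ (-r) : ℝ) • (1:Mat) - hrpow Y (-r)).PosSemidef := by
  rw [hrpow_eq hY]
  have h1 : (β ^ (-r) : ℝ) • (1:Mat) - mfun hY (fun x => x ^ (-r))
      = mfun hY (fun x => β ^ (-r) - x ^ (-r)) := by
    conv_lhs => rw [← mfun_const hY (β ^ (-r))]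
    rw [mfun_sub hY]
  rw [h1]
  exact mfun_posSemidef hY _ (fun i => by
    have := rpow_neg_anti hβ (h i) hr
    linarith)

lemma hrpow_lip {r β c : ℝ} (hr : 0 < r) (hβ : 0 < β) (hβc : β ≤ c)
    {Y Z : Mat} (hY : Y.IsHermitian) (hZ : Z.IsHermitian)
    (hY1 : ∀ i, β ≤ hY.eigenvalues i) (hY2 : ∀ i, hY.eigenvalues i ≤ c)
    (hZ1 : ∀ i, β ≤ hZ.eigenvalues i) (hZ2 : ∀ i, hZ.eigenvalues i ≤ c) :
    ‖hrpow Y (-r) - hrpow Z (-r)‖ ≤ r * β ^ (-r-1) * ‖Y - Z‖ := by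
  have hc : 0 < c := lt_of_lt_of_le hβ hβc
  set ρ : ℝ := 1 - β/c with hρdef
  have hρ0 : 0 ≤ ρ := by
    have h1 : β/c ≤ 1 := (div_le_one hc).mpr hβc
    rw [hρdef]; linarith
  have hρ1 : ρ < 1 := by
    have h1 : 0 < β/c := div_pos hβ hc
    rw [hρdef]; linarith
  -- structural identity
  have hfun : ∀ {X : Mat} (hX : X.IsHermitian),
      (1 : Mat) - c⁻¹ • X = mfun hX (fun x => 1 - c⁻¹ * x) := by
    intro X hX
    have h1 : mfun hX (fun x => 1 - c⁻¹ * x)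
        = mfun hX (fun _ => (1:ℝ)) - mfun hX (fun x => c⁻¹ * x) :=
      (mfun_sub hX _ _).symm
    have h2 : mfun hX (fun x => c⁻¹ * x) = c⁻¹ • X := by
      rw [← mfun_smul hX, mfun_id hX]
    rw [h1, h2, mfun_one hX]
  -- norm bound for W-type matrices
  have hl : ∀ {X : Mat} (hX : X.IsHermitian), (∀ i, β ≤ hX.eigenvalues i) →
      (∀ i, hX.eigenvalues i ≤ c) → ‖(1 : Mat) - c⁻¹ • X‖ ≤ ρ := by
    intro X hX h1 h2
    rw [hfun hX]
    refine mfun_norm_le hX _ ρ hρ0 (fun i => ?_)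
    have hb1 : c⁻¹ * hX.eigenvalues i ≤ 1 := by
      rw [inv_mul_eq_div, div_le_one hc]; exact h2 i
    have hb2 : β / c ≤ c⁻¹ * hX.eigenvalues i := by
      have h3 : c⁻¹ * β ≤ c⁻¹ * hX.eigenvalues i :=
        mul_le_mul_of_nonneg_left (h1 i) (inv_nonneg.mpr hc.le)
      rw [div_eq_inv_mul]
      exact h3
    rw [abs_le]
    constructor
    · linarith
    · rw [hρdef]; linarith
  have hWn : ‖(1:Mat) - c⁻¹ • Y‖ ≤ ρ := hl hY hY1 hY2
  have hVn : ‖(1:Mat) - c⁻¹ • Z‖ ≤ ρ := hl hZ hZ1 hZ2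
  have hWV : ((1:Mat) - c⁻¹ • Y) - ((1:Mat) - c⁻¹ • Z) = c⁻¹ • (Z - Y) := by
    module
  have hWVn : ‖((1:Mat) - c⁻¹ • Y) - ((1:Mat) - c⁻¹ • Z)‖ = c⁻¹ * ‖Y - Z‖ := by
    rw [hWV, norm_smul, Real.norm_eq_abs, abs_of_pos (inv_pos.mpr hc), norm_sub_rev]
  -- partial sums as mfun
  have hSN : ∀ (N : ℕ) {X : Mat} (hX : X.IsHermitian),
      (∑ k ∈ Finset.range N, bc r k • ((1:Mat) - c⁻¹ • X) ^ k)
        = mfun hX (fun x => ∑ k ∈ Finset.range N, bc r k * (1 - c⁻¹ * x) ^ k) := by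
    intro N X hX
    have h1 : ∀ k : ℕ, bc r k • ((1:Mat) - c⁻¹ • X) ^ k
        = mfun hX (fun x => bc r k * (1 - c⁻¹ * x) ^ k) := by
      intro k
      rw [hfun hX, mfun_pow hX, mfun_smul hX]
    rw [Finset.sum_congr rfl (fun k _ => h1 k), mfun_finsum hX]
  -- coefficient tail bound
  have hTpart : ∀ N, ∑ k ∈ Finset.range N, bc r k * ((k:ℝ) * ρ^(k-1))
      ≤ r * (1-ρ)^(-(r+1)) :=
    fun N => sum_le_hasSum _ (fun k _ => mul_nonneg (bc_pos hr k).le (by positivity))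
      (bc_deriv_hasSum hr hρ0 hρ1)
  -- difference of partial sums
  have hSdiff : ∀ N : ℕ, ‖(∑ k ∈ Finset.range N, bc r k • ((1:Mat) - c⁻¹ • Y) ^ k)
      - (∑ k ∈ Finset.range N, bc r k • ((1:Mat) - c⁻¹ • Z) ^ k)‖
      ≤ (r * (1-ρ)^(-(r+1))) * (c⁻¹ * ‖Y - Z‖) := by
    intro N
    rw [← Finset.sum_sub_distrib]
    refine le_trans (norm_sum_le _ _) ?_
    have hterm : ∀ k ∈ Finset.range N,
        ‖bc r k • ((1:Mat) - c⁻¹ • Y) ^ k - bc r k • ((1:Mat) - c⁻¹ • Z) ^ k‖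
        ≤ (bc r k * ((k:ℝ) * ρ^(k-1))) * (c⁻¹ * ‖Y - Z‖) := by
      intro k _
      rw [← smul_sub, norm_smul, Real.norm_eq_abs, abs_of_pos (bc_pos hr k)]
      have hp := norm_pow_sub_pow hWn hVn hρ0 k
      rw [hWVn] at hp
      calc bc r k * ‖((1:Mat) - c⁻¹ • Y) ^ k - ((1:Mat) - c⁻¹ • Z) ^ k‖
          ≤ bc r k * ((k:ℝ) * ρ^(k-1) * (c⁻¹ * ‖Y - Z‖)) :=
            mul_le_mul_of_nonneg_left hp (bc_pos hr k).le
        _ = (bc r k * ((k:ℝ) * ρ^(k-1))) * (c⁻¹ * ‖Y - Z‖) := by ring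
    refine le_trans (Finset.sum_le_sum hterm) ?_
    rw [← Finset.sum_mul]
    exact mul_le_mul_of_nonneg_right (hTpart N) (by positivity)
  -- error term bound
  have herr : ∀ (N : ℕ) {X : Mat} (hX : X.IsHermitian),
      ‖hrpow X (-r) - (c ^ (-r) : ℝ) • (∑ k ∈ Finset.range N, bc r k • ((1:Mat) - c⁻¹ • X) ^ k)‖
        ≤ ∑ i, |(hX.eigenvalues i) ^ (-r)
            - c ^ (-r) * ∑ k ∈ Finset.range N, bc r k * (1 - c⁻¹ * hX.eigenvalues i) ^ k| := by
    intro N X hX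
    rw [hSN N hX, hrpow_eq hX, mfun_smul hX, mfun_sub hX]
    refine mfun_norm_le hX _ _ (Finset.sum_nonneg (fun i _ => abs_nonneg _)) (fun i => ?_)
    exact Finset.single_le_sum (f := fun j => |(hX.eigenvalues j) ^ (-r)
      - c ^ (-r) * ∑ k ∈ Finset.range N, bc r k * (1 - c⁻¹ * hX.eigenvalues j) ^ k|)
      (fun j _ => abs_nonneg _) (Finset.mem_univ i)
  -- error terms tend to zero
  have htend : ∀ {X : Mat} (hX : X.IsHermitian), (∀ i, β ≤ hX.eigenvalues i) →
      (∀ i, hX.eigenvalues i ≤ c) →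
      Tendsto (fun N => ∑ i, |(hX.eigenvalues i) ^ (-r)
          - c ^ (-r) * ∑ k ∈ Finset.range N, bc r k * (1 - c⁻¹ * hX.eigenvalues i) ^ k|)
        atTop (nhds 0) := by
    intro X hX h1 h2
    have h0 : (0:ℝ) = ∑ _i : Fin n, (0:ℝ) := by simp
    rw [h0]
    refine tendsto_finset_sum _ (fun i _ => ?_)
    have hlam0 : 0 < hX.eigenvalues i := lt_of_lt_of_le hβ (h1 i)
    have hx0 : 0 ≤ 1 - c⁻¹ * hX.eigenvalues i := by
      have : c⁻¹ * hX.eigenvalues i ≤ 1 := by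
        rw [inv_mul_eq_div, div_le_one hc]; exact h2 i
      linarith
    have hx1 : 1 - c⁻¹ * hX.eigenvalues i < 1 := by
      have : 0 < c⁻¹ * hX.eigenvalues i := mul_pos (inv_pos.mpr hc) hlam0
      linarith
    have hsum := bc_hasSum hr hx0 hx1
    have hval : (1 - (1 - c⁻¹ * hX.eigenvalues i)) = c⁻¹ * hX.eigenvalues i := by ring
    rw [hval] at hsum
    have hcr : (0:ℝ) < c ^ (-r) := Real.rpow_pos_of_pos hc _
    have hlim : c ^ (-r) * ((c⁻¹ * hX.eigenvalues i) ^ (-r):ℝ) = (hX.eigenvalues i) ^ (-r) := by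
      rw [Real.mul_rpow (inv_nonneg.mpr hc.le) hlam0.le, Real.inv_rpow hc.le,
        ← mul_assoc, mul_inv_cancel₀ (ne_of_gt hcr), one_mul]
    have htends := hsum.tendsto_sum_nat
    have := ((htends.const_mul (c ^ (-r))).const_sub ((hX.eigenvalues i) ^ (-r))).abs
    rw [hlim] at this
    simpa using this
  -- main bound for each N
  have hcr : (0:ℝ) < c ^ (-r) := Real.rpow_pos_of_pos hc _
  have hmain : ∀ N : ℕ, ‖hrpow Y (-r) - hrpow Z (-r)‖
      ≤ (∑ i, |(hY.eigenvalues i) ^ (-r)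
            - c ^ (-r) * ∑ k ∈ Finset.range N, bc r k * (1 - c⁻¹ * hY.eigenvalues i) ^ k|)
        + (∑ i, |(hZ.eigenvalues i) ^ (-r)
            - c ^ (-r) * ∑ k ∈ Finset.range N, bc r k * (1 - c⁻¹ * hZ.eigenvalues i) ^ k|)
        + c ^ (-r) * ((r * (1-ρ)^(-(r+1))) * (c⁻¹ * ‖Y - Z‖)) := by
    intro N
    have hdec : hrpow Y (-r) - hrpow Z (-r)
        = (hrpow Y (-r) - (c ^ (-r) : ℝ) • (∑ k ∈ Finset.range N, bc r k • ((1:Mat) - c⁻¹ • Y) ^ k))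
          - (hrpow Z (-r) - (c ^ (-r) : ℝ) • (∑ k ∈ Finset.range N, bc r k • ((1:Mat) - c⁻¹ • Z) ^ k))
          + (c ^ (-r) : ℝ) • ((∑ k ∈ Finset.range N, bc r k • ((1:Mat) - c⁻¹ • Y) ^ k)
            - (∑ k ∈ Finset.range N, bc r k • ((1:Mat) - c⁻¹ • Z) ^ k)) := by
      module
    calc ‖hrpow Y (-r) - hrpow Z (-r)‖
        ≤ ‖(hrpow Y (-r) - (c ^ (-r) : ℝ) • (∑ k ∈ Finset.range N, bc r k • ((1:Mat) - c⁻¹ • Y) ^ k))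
          - (hrpow Z (-r) - (c ^ (-r) : ℝ) • (∑ k ∈ Finset.range N, bc r k • ((1:Mat) - c⁻¹ • Z) ^ k))‖
          + ‖(c ^ (-r) : ℝ) • ((∑ k ∈ Finset.range N, bc r k • ((1:Mat) - c⁻¹ • Y) ^ k)
            - (∑ k ∈ Finset.range N, bc r k • ((1:Mat) - c⁻¹ • Z) ^ k))‖ := by
          rw [hdec]; exact norm_add_le _ _
      _ ≤ (‖hrpow Y (-r) - (c ^ (-r) : ℝ) • (∑ k ∈ Finset.range N, bc r k • ((1:Mat) - c⁻¹ • Y) ^ k)‖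
          + ‖hrpow Z (-r) - (c ^ (-r) : ℝ) • (∑ k ∈ Finset.range N, bc r k • ((1:Mat) - c⁻¹ • Z) ^ k)‖)
          + ‖(c ^ (-r) : ℝ) • ((∑ k ∈ Finset.range N, bc r k • ((1:Mat) - c⁻¹ • Y) ^ k)
            - (∑ k ∈ Finset.range N, bc r k • ((1:Mat) - c⁻¹ • Z) ^ k))‖ := by
          gcongr
          exact norm_sub_le _ _
      _ ≤ _ := by
          rw [norm_smul, Real.norm_eq_abs, abs_of_pos hcr]
          refine add_le_add (add_le_add (herr N hY) (herr N hZ)) ?_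
          exact mul_le_mul_of_nonneg_left (hSdiff N) hcr.le
  -- take the limit in N
  have hlimit : Tendsto (fun N : ℕ =>
      (∑ i, |(hY.eigenvalues i) ^ (-r)
            - c ^ (-r) * ∑ k ∈ Finset.range N, bc r k * (1 - c⁻¹ * hY.eigenvalues i) ^ k|)
        + (∑ i, |(hZ.eigenvalues i) ^ (-r)
            - c ^ (-r) * ∑ k ∈ Finset.range N, bc r k * (1 - c⁻¹ * hZ.eigenvalues i) ^ k|)
        + c ^ (-r) * ((r * (1-ρ)^(-(r+1))) * (c⁻¹ * ‖Y - Z‖)))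
      atTop (nhds ((0 + 0) + c ^ (-r) * ((r * (1-ρ)^(-(r+1))) * (c⁻¹ * ‖Y - Z‖)))) := by
    exact (((htend hY hY1 hY2).add (htend hZ hZ1 hZ2)).add tendsto_const_nhds)
  have hfinal := ge_of_tendsto hlimit (Filter.Eventually.of_forall hmain)
  -- final arithmetic
  have harith : c ^ (-r) * ((r * (1-ρ)^(-(r+1))) * (c⁻¹ * ‖Y - Z‖))
      = r * β ^ (-r-1) * ‖Y - Z‖ := by
    have h1ρ : 1 - ρ = β / c := by rw [hρdef]; ring
    rw [h1ρ, Real.div_rpow hβ.le hc.le]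
    have hbb : β ^ (-(r+1)) = β ^ (-r-1) := by ring_nf
    have hcc : c ^ (-(r+1)) = c ^ (-r) * c⁻¹ := by
      rw [show -(r+1) = (-r) + (-1) by ring, Real.rpow_add hc, Real.rpow_neg_one]
    rw [hbb, hcc]
    have hcrne : c ^ (-r) ≠ 0 := ne_of_gt hcr
    have hcne : c ≠ 0 := ne_of_gt hc
    field_simp
  rw [harith] at hfinal
  linarith [hfinal]

end StmtAux

end LipSection

noncomputable section TopSection

namespace StmtAux

open Matrix
open scoped ComplexOrder Matrix.Norms.L2Operator

variable {n : ℕ}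

local notation "Mat" => Matrix (Fin n) (Fin n) ℂ

lemma dot_conj_eq (A : Mat) (x : Fin n → ℂ) :
    star x ⬝ᵥ ((Aᴴ * A) *ᵥ x) = star (A *ᵥ x) ⬝ᵥ (A *ᵥ x) := by
  rw [Matrix.star_mulVec, Matrix.dotProduct_mulVec, Matrix.dotProduct_mulVec,
    Matrix.vecMul_vecMul]

lemma psd_rsmul {M : Mat} (hM : M.PosSemidef) {c : ℝ} (hc : 0 ≤ c) :
    (c • M).PosSemidef := by
  rw [rsmul_eq]
  refine Matrix.PosSemidef.of_dotProduct_mulVec_nonneg ?_ ?_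
  · unfold Matrix.IsHermitian
    rw [Matrix.conjTranspose_smul, hM.1, Complex.star_def, Complex.conj_ofReal]
  · intro x
    rw [Matrix.smul_mulVec, dotProduct_smul, smul_eq_mul]
    have h1 : (0:ℂ) ≤ (c:ℂ) := by rw [Complex.zero_le_real]; exact hc
    exact mul_nonneg h1 (hM.dotProduct_mulVec_nonneg x)

lemma re_dot_rsmul (c : ℝ) (M : Mat) (x : Fin n → ℂ) :
    (star x ⬝ᵥ ((c • M) *ᵥ x)).re = c * (star x ⬝ᵥ (M *ᵥ x)).re := by
  rw [rsmul_eq, Matrix.smul_mulVec, dotProduct_smul, smul_eq_mul,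
    Complex.re_ofReal_mul]

lemma herm_rsmul {M : Mat} (hM : M.IsHermitian) (c : ℝ) : (c • M).IsHermitian := by
  rw [rsmul_eq]
  unfold Matrix.IsHermitian
  rw [Matrix.conjTranspose_smul, hM, Complex.star_def, Complex.conj_ofReal]

lemma conj_sand (c : ℝ) (F A : Mat) :
    Aᴴ * ((c • (1:Mat)) - F) * A = c • (Aᴴ * A) - Aᴴ * F * A := by
  rw [Matrix.mul_sub, Matrix.sub_mul, rsmul_eq, rsmul_eq]
  congr 1
  rw [mul_smul_comm, mul_one, smul_mul_assoc]

lemma norm_conj_sand (A F : Mat) : ‖Aᴴ * F * A‖ ≤ ‖A‖^2 * ‖F‖ := by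
  calc ‖Aᴴ * F * A‖ ≤ ‖Aᴴ * F‖ * ‖A‖ := norm_mul_le _ _
    _ ≤ (‖Aᴴ‖ * ‖F‖) * ‖A‖ := mul_le_mul_of_nonneg_right (norm_mul_le _ _) (norm_nonneg _)
    _ = ‖A‖^2 * ‖F‖ := by rw [Matrix.l2_opNorm_conjTranspose]; ring

lemma continuous_conjT : Continuous (fun X : Mat => Xᴴ) := by
  have h : LipschitzWith 1 (fun X : Mat => Xᴴ) := by
    refine LipschitzWith.of_dist_le_mul (fun X Y => ?_)
    rw [dist_eq_norm, dist_eq_norm, ← Matrix.conjTranspose_sub, Matrix.l2_opNorm_conjTranspose,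
      NNReal.coe_one, one_mul]
  exact h.continuous

lemma continuous_quad (x : Fin n → ℂ) : Continuous (fun X : Mat => star x ⬝ᵥ (X *ᵥ x)) := by
  set C : ℝ := ∑ i, ‖x i‖^2 with hC
  have hC0 : 0 ≤ C := Finset.sum_nonneg (fun i _ => sq_nonneg _)
  have h : LipschitzWith C.toNNReal (fun X : Mat => star x ⬝ᵥ (X *ᵥ x)) := by
    refine LipschitzWith.of_dist_le_mul (fun X Y => ?_)
    rw [dist_eq_norm, dist_eq_norm]
    have h1 : star x ⬝ᵥ (X *ᵥ x) - star x ⬝ᵥ (Y *ᵥ x) = star x ⬝ᵥ ((X - Y) *ᵥ x) := by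
      rw [Matrix.sub_mulVec, dotProduct_sub]
    rw [h1]
    have h2 := dot_quad_abs_le (X - Y) x
    rw [Real.coe_toNNReal _ hC0]
    calc ‖star x ⬝ᵥ ((X - Y) *ᵥ x)‖ ≤ ‖X - Y‖ * C := h2
      _ = C * ‖X - Y‖ := by ring
  exact h.continuous

lemma isClosed_psd : IsClosed {X : Mat | X.PosSemidef} := by
  have hset : {X : Mat | X.PosSemidef}
      = {X : Mat | Xᴴ = X} ∩ ⋂ x : Fin n → ℂ, {X : Mat | 0 ≤ star x ⬝ᵥ (X *ᵥ x)} := by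
    ext X
    simp only [Set.mem_setOf_eq, Set.mem_inter_iff, Set.mem_iInter]
    exact Matrix.posSemidef_iff_dotProduct_mulVec
  rw [hset]
  refine IsClosed.inter (isClosed_eq continuous_conjT continuous_id)
    (isClosed_iInter (fun x => ?_))
  have hcl : IsClosed {z : ℂ | 0 ≤ z} := by
    have h2 : {z : ℂ | 0 ≤ z} = Complex.re ⁻¹' (Set.Ici 0) ∩ Complex.im ⁻¹' {0} := by
      ext z
      simp only [Set.mem_setOf_eq, Set.mem_inter_iff, Set.mem_preimage, Set.mem_Ici,
        Set.mem_singleton_iff, Complex.le_def, Complex.zero_re, Complex.zero_im]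
      tauto
    rw [h2]
    exact (isClosed_Ici.preimage Complex.continuous_re).inter
      (isClosed_singleton.preimage Complex.continuous_im)
  exact hcl.preimage (continuous_quad x)

end StmtAux

end TopSection


section MainTheoremProof

open StmtAux

set_option maxHeartbeats 2000000 in
theorem stmt12 {n : ℕ} (hn : 0 < n) (s t p : ℝ) (hp : 1 ≤ p) (hpt : p ≤ t) (hts : t ≤ s)
    (A B Q : Matrix (Fin n) (Fin n) ℂ) (hA : IsUnit A) (hB : IsUnit B) (hQ : Q.PosDef)
    (α : ℝ) (hα0 : 0 < α) (hα1 : α ≤ lamMin Q)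
    (hα2 : α + α ^ (-(t / s)) * specNorm A ^ 2 + α ^ (-(p / s)) * specNorm B ^ 2 < lamMin Q)
    (β : ℝ) (hβ : β = lamMin (Q - (α ^ (-(t / s))) • (Aᴴ * A) - (α ^ (-(p / s))) • (Bᴴ * B)))
    (hβ2 : t * β ^ (-(t / s)) * specNorm A ^ 2 + p * β ^ (-(p / s)) * specNorm B ^ 2 < s * β) :
    ∃ Y : Matrix (Fin n) (Fin n) ℂ,
      (Y.PosDef ∧ Y + Aᴴ * hrpow Y (-(t / s)) * A + Bᴴ * hrpow Y (-(p / s)) * B = Q ∧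
        lle (α • (1 : Matrix (Fin n) (Fin n) ℂ)) Y ∧ lle Y Q) ∧
      ∀ Z : Matrix (Fin n) (Fin n) ℂ,
        (Z.PosDef ∧ Z + Aᴴ * hrpow Z (-(t / s)) * A + Bᴴ * hrpow Z (-(p / s)) * B = Q ∧
          lle (α • (1 : Matrix (Fin n) (Fin n) ℂ)) Z ∧ lle Z Q) →
        Z = Y := by
  classical
  have hsn : ∀ M : Matrix (Fin n) (Fin n) ℂ, specNorm M = ‖M‖ := fun _ => rfl
  have hp0 : (0:ℝ) < p := lt_of_lt_of_le one_pos hp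
  have ht0 : (0:ℝ) < t := lt_of_lt_of_le hp0 hpt
  have hs0 : (0:ℝ) < s := lt_of_lt_of_le ht0 hts
  have hr1 : 0 < t / s := div_pos ht0 hs0
  have hr2 : 0 < p / s := div_pos hp0 hs0
  have ha1 : (0:ℝ) ≤ α ^ (-(t / s)) := (Real.rpow_pos_of_pos hα0 _).le
  have ha2 : (0:ℝ) ≤ α ^ (-(p / s)) := (Real.rpow_pos_of_pos hα0 _).le
  have hQh : Q.IsHermitian := hQ.isHermitian
  have hApsd : (Aᴴ * A).PosSemidef := Matrix.posSemidef_conjTranspose_mul_self A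
  have hBpsd : (Bᴴ * B).PosSemidef := Matrix.posSemidef_conjTranspose_mul_self B
  have hM'h : (Q - (α ^ (-(t / s))) • (Aᴴ * A) - (α ^ (-(p / s))) • (Bᴴ * B)).IsHermitian :=
    (hQh.sub (herm_rsmul hApsd.1 _)).sub (herm_rsmul hBpsd.1 _)
  -- β > α
  obtain ⟨i0, hi0⟩ := exists_eig_lamMin hn hM'h
  have hvQ : lamMin Q ≤ Complex.re (star (evec hM'h i0) ⬝ᵥ (Q *ᵥ evec hM'h i0)) := by
    have h2 := psd_re_quad (psd_sub_lamMin hQh) (evec hM'h i0)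
    rw [Matrix.sub_mulVec, dotProduct_sub, dot_smul_one, evec_unit, mul_one,
      Complex.sub_re, Complex.ofReal_re] at h2
    linarith
  have hvA : Complex.re (star (evec hM'h i0) ⬝ᵥ ((Aᴴ * A) *ᵥ evec hM'h i0)) ≤ ‖A‖^2 := by
    rw [dot_conj_eq, dot_star_self_eq, Complex.ofReal_re]
    have h3 := dot_mulVec_le A (evec hM'h i0)
    rw [evec_sum_sq hM'h i0, mul_one] at h3
    exact h3
  have hvB : Complex.re (star (evec hM'h i0) ⬝ᵥ ((Bᴴ * B) *ᵥ evec hM'h i0)) ≤ ‖B‖^2 := by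
    rw [dot_conj_eq, dot_star_self_eq, Complex.ofReal_re]
    have h3 := dot_mulVec_le B (evec hM'h i0)
    rw [evec_sum_sq hM'h i0, mul_one] at h3
    exact h3
  have hvA0 : 0 ≤ Complex.re (star (evec hM'h i0) ⬝ᵥ ((Aᴴ * A) *ᵥ evec hM'h i0)) :=
    psd_re_quad hApsd _
  have hvB0 : 0 ≤ Complex.re (star (evec hM'h i0) ⬝ᵥ ((Bᴴ * B) *ᵥ evec hM'h i0)) :=
    psd_re_quad hBpsd _
  have hβval : β = Complex.re (star (evec hM'h i0) ⬝ᵥ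
      ((Q - (α ^ (-(t / s))) • (Aᴴ * A) - (α ^ (-(p / s))) • (Bᴴ * B)) *ᵥ evec hM'h i0)) := by
    rw [hβ, ← hi0, eigenvalues_eq' hM'h i0]
  have hexp : Complex.re (star (evec hM'h i0) ⬝ᵥ
      ((Q - (α ^ (-(t / s))) • (Aᴴ * A) - (α ^ (-(p / s))) • (Bᴴ * B)) *ᵥ evec hM'h i0))
      = Complex.re (star (evec hM'h i0) ⬝ᵥ (Q *ᵥ evec hM'h i0))
        - α ^ (-(t / s)) * Complex.re (star (evec hM'h i0) ⬝ᵥ ((Aᴴ * A) *ᵥ evec hM'h i0))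
        - α ^ (-(p / s)) * Complex.re (star (evec hM'h i0) ⬝ᵥ ((Bᴴ * B) *ᵥ evec hM'h i0)) := by
    rw [Matrix.sub_mulVec, Matrix.sub_mulVec, dotProduct_sub, dotProduct_sub,
      Complex.sub_re, Complex.sub_re, re_dot_rsmul, re_dot_rsmul]
  have hβα : α < β := by
    have h4 := hα2
    rw [hsn A, hsn B] at h4
    have p1 := mul_le_mul_of_nonneg_left hvA ha1
    have p2 := mul_le_mul_of_nonneg_left hvB ha2
    rw [hβval, hexp]
    linarith
  have hβ0 : 0 < β := lt_trans hα0 hβα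
  have hM'β : ((Q - (α ^ (-(t / s))) • (Aᴴ * A) - (α ^ (-(p / s))) • (Bᴴ * B)) - β • 1).PosSemidef := by
    rw [hβ]
    exact psd_sub_lamMin hM'h
  have hQβ : (Q - β • 1).PosSemidef := by
    have e : Q - β • (1 : Matrix (Fin n) (Fin n) ℂ)
        = ((Q - (α ^ (-(t / s))) • (Aᴴ * A) - (α ^ (-(p / s))) • (Bᴴ * B)) - β • 1)
          + ((α ^ (-(t / s))) • (Aᴴ * A) + (α ^ (-(p / s))) • (Bᴴ * B)) := by
      abel
    rw [e]
    exact hM'β.add ((psd_rsmul hApsd ha1).add (psd_rsmul hBpsd ha2))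
  have hQQ : (Q - Q).PosSemidef := by rw [sub_self]; exact Matrix.PosSemidef.zero
  have hβc : β ≤ ‖Q‖ := by
    have h1 := eig_ge_of_psd hQh hQβ ⟨0, hn⟩
    have h2 := eig_le_norm_of_psd_sub hQh hQQ ⟨0, hn⟩
    linarith
  -- the invariant set
  set SP : Set (Matrix (Fin n) (Fin n) ℂ) :=
    {X | (X - β • 1).PosSemidef ∧ (Q - X).PosSemidef} with hSPdef
  have hSPclosed : IsClosed SP := by
    have hrw : SP = ((fun X : Matrix (Fin n) (Fin n) ℂ => X - β • 1) ⁻¹' {M | M.PosSemidef})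
        ∩ ((fun X : Matrix (Fin n) (Fin n) ℂ => Q - X) ⁻¹' {M | M.PosSemidef}) := rfl
    rw [hrw]
    exact (isClosed_psd.preimage (continuous_id.sub continuous_const)).inter
      (isClosed_psd.preimage (continuous_const.sub continuous_id))
  haveI : Nonempty ↥SP := ⟨⟨Q, hQβ, hQQ⟩⟩
  haveI : CompleteSpace ↥SP := hSPclosed.completeSpace_coe
  have memfacts : ∀ X : Matrix (Fin n) (Fin n) ℂ, X ∈ SP →
      ∃ hX : X.IsHermitian, (∀ i, β ≤ hX.eigenvalues i) ∧ (∀ i, hX.eigenvalues i ≤ ‖Q‖) := by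
    intro X hX
    have hXh : X.IsHermitian := herm_of_psd_sub hX.1
    exact ⟨hXh, fun i => eig_ge_of_psd hXh hX.1 i, fun i => eig_le_norm_of_psd_sub hXh hX.2 i⟩
  -- invariance
  have hinv : ∀ (X : Matrix (Fin n) (Fin n) ℂ) (hXh : X.IsHermitian),
      (∀ i, α ≤ hXh.eigenvalues i) →
      ((Q - Aᴴ * hrpow X (-(t/s)) * A - Bᴴ * hrpow X (-(p/s)) * B) - β • 1).PosSemidef := by
    intro X hXh heig
    have h1 := hrpow_le_smul_one hα0 hr1 hXh heig
    have h2 := hrpow_le_smul_one hα0 hr2 hXh heig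
    have h3 := Matrix.PosSemidef.conjTranspose_mul_mul_same h1 A
    have h4 := Matrix.PosSemidef.conjTranspose_mul_mul_same h2 B
    have h5 := (hM'β.add h3).add h4
    have e : ((Q - (α ^ (-(t / s))) • (Aᴴ * A) - (α ^ (-(p / s))) • (Bᴴ * B)) - β • 1)
        + (Aᴴ * ((α ^ (-(t/s)) : ℝ) • (1 : Matrix (Fin n) (Fin n) ℂ) - hrpow X (-(t/s))) * A)
        + (Bᴴ * ((α ^ (-(p/s)) : ℝ) • (1 : Matrix (Fin n) (Fin n) ℂ) - hrpow X (-(p/s))) * B)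
        = (Q - Aᴴ * hrpow X (-(t/s)) * A - Bᴴ * hrpow X (-(p/s)) * B) - β • 1 := by
      rw [conj_sand, conj_sand]
      abel
    rw [← e]
    exact h5
  have hGmem : ∀ X : Matrix (Fin n) (Fin n) ℂ, X ∈ SP →
      (Q - Aᴴ * hrpow X (-(t/s)) * A - Bᴴ * hrpow X (-(p/s)) * B) ∈ SP := by
    intro X hX
    obtain ⟨hXh, hXβ, hXc⟩ := memfacts X hX
    refine ⟨hinv X hXh (fun i => le_trans hβα.le (hXβ i)), ?_⟩
    have hps1 := hrpow_psd hXh (fun i => le_trans hβ0.le (hXβ i)) (-(t/s))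
    have hps2 := hrpow_psd hXh (fun i => le_trans hβ0.le (hXβ i)) (-(p/s))
    have h3 := Matrix.PosSemidef.conjTranspose_mul_mul_same hps1 A
    have h4 := Matrix.PosSemidef.conjTranspose_mul_mul_same hps2 B
    have e : Q - (Q - Aᴴ * hrpow X (-(t/s)) * A - Bᴴ * hrpow X (-(p/s)) * B)
        = Aᴴ * hrpow X (-(t/s)) * A + Bᴴ * hrpow X (-(p/s)) * B := by abel
    rw [e]
    exact h3.add h4
  set G : ↥SP → ↥SP := fun X =>
    ⟨Q - Aᴴ * hrpow X.1 (-(t/s)) * A - Bᴴ * hrpow X.1 (-(p/s)) * B, hGmem X.1 X.2⟩ with hGdef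
  have hGcoe : ∀ X : ↥SP, (G X).1
      = Q - Aᴴ * hrpow X.1 (-(t/s)) * A - Bᴴ * hrpow X.1 (-(p/s)) * B := fun X => by
    rw [hGdef]
  -- contraction constant
  set K : ℝ := (t/s) * β ^ (-(t/s)-1) * ‖A‖^2 + (p/s) * β ^ (-(p/s)-1) * ‖B‖^2 with hKdef
  have hbe : ∀ r : ℝ, β ^ (-r-1) = β ^ (-r) * β⁻¹ := fun r => by
    rw [show -r-1 = (-r) + (-1) by ring, Real.rpow_add hβ0, Real.rpow_neg_one]
  have hK0 : 0 ≤ K := by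
    rw [hKdef]
    have := Real.rpow_pos_of_pos hβ0 (-(t/s)-1)
    have := Real.rpow_pos_of_pos hβ0 (-(p/s)-1)
    positivity
  have hK1 : K < 1 := by
    have h4 := hβ2
    rw [hsn A, hsn B] at h4
    have hKeq : K = (t * β ^ (-(t/s)) * ‖A‖^2 + p * β ^ (-(p/s)) * ‖B‖^2) / (s*β) := by
      rw [hKdef, hbe (t/s), hbe (p/s)]
      field_simp
    rw [hKeq, div_lt_one (by positivity)]
    exact h4
  have hdist : ∀ X Y : ↥SP, dist (G X) (G Y) ≤ K * dist X Y := by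
    intro X Y
    obtain ⟨hXh, hXβ, hXc⟩ := memfacts X.1 X.2
    obtain ⟨hYh, hYβ, hYc⟩ := memfacts Y.1 Y.2
    have hgoal : dist (G X) (G Y) = ‖(G X).1 - (G Y).1‖ := by
      rw [Subtype.dist_eq]; exact dist_eq_norm _ _
    have hgoal2 : dist X Y = ‖X.1 - Y.1‖ := by
      rw [Subtype.dist_eq]; exact dist_eq_norm _ _
    rw [hgoal, hgoal2, hGcoe X, hGcoe Y]
    have e : (Q - Aᴴ * hrpow X.1 (-(t/s)) * A - Bᴴ * hrpow X.1 (-(p/s)) * B)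
        - (Q - Aᴴ * hrpow Y.1 (-(t/s)) * A - Bᴴ * hrpow Y.1 (-(p/s)) * B)
        = Aᴴ * (hrpow Y.1 (-(t/s)) - hrpow X.1 (-(t/s))) * A
          + Bᴴ * (hrpow Y.1 (-(p/s)) - hrpow X.1 (-(p/s))) * B := by
      rw [Matrix.mul_sub, Matrix.sub_mul, Matrix.mul_sub, Matrix.sub_mul]
      abel
    rw [e]
    have hlipA := hrpow_lip hr1 hβ0 hβc hYh hXh hYβ hYc hXβ hXc
    have hlipB := hrpow_lip hr2 hβ0 hβc hYh hXh hYβ hYc hXβ hXc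
    have hrev : ‖Y.1 - X.1‖ = ‖X.1 - Y.1‖ := norm_sub_rev _ _
    rw [hrev] at hlipA hlipB
    have hnA := norm_conj_sand A (hrpow Y.1 (-(t/s)) - hrpow X.1 (-(t/s)))
    have hnB := norm_conj_sand B (hrpow Y.1 (-(p/s)) - hrpow X.1 (-(p/s)))
    have htri := norm_add_le (Aᴴ * (hrpow Y.1 (-(t/s)) - hrpow X.1 (-(t/s))) * A)
      (Bᴴ * (hrpow Y.1 (-(p/s)) - hrpow X.1 (-(p/s))) * B)
    have hA2 : (0:ℝ) ≤ ‖A‖^2 := sq_nonneg _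
    have hB2 : (0:ℝ) ≤ ‖B‖^2 := sq_nonneg _
    have pA := mul_le_mul_of_nonneg_left hlipA hA2
    have pB := mul_le_mul_of_nonneg_left hlipB hB2
    rw [hKdef]
    calc ‖Aᴴ * (hrpow Y.1 (-(t/s)) - hrpow X.1 (-(t/s))) * A
          + Bᴴ * (hrpow Y.1 (-(p/s)) - hrpow X.1 (-(p/s))) * B‖
        ≤ ‖Aᴴ * (hrpow Y.1 (-(t/s)) - hrpow X.1 (-(t/s))) * A‖
          + ‖Bᴴ * (hrpow Y.1 (-(p/s)) - hrpow X.1 (-(p/s))) * B‖ := htri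
      _ ≤ ‖A‖^2 * ‖hrpow Y.1 (-(t/s)) - hrpow X.1 (-(t/s))‖
          + ‖B‖^2 * ‖hrpow Y.1 (-(p/s)) - hrpow X.1 (-(p/s))‖ := add_le_add hnA hnB
      _ ≤ ‖A‖^2 * ((t/s) * β ^ (-(t/s)-1) * ‖X.1 - Y.1‖)
          + ‖B‖^2 * ((p/s) * β ^ (-(p/s)-1) * ‖X.1 - Y.1‖) := add_le_add pA pB
      _ = ((t/s) * β ^ (-(t/s)-1) * ‖A‖^2 + (p/s) * β ^ (-(p/s)-1) * ‖B‖^2) * ‖X.1 - Y.1‖ := by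
          ring
  have hcontr : ContractingWith K.toNNReal G := by
    constructor
    · exact_mod_cast Real.toNNReal_lt_one.mpr hK1
    · refine LipschitzWith.of_dist_le_mul (fun X Y => ?_)
      rw [Real.coe_toNNReal _ hK0]
      exact hdist X Y
  -- the fixed point
  have hfix := hcontr.fixedPoint_isFixedPt
  set Ybar : Matrix (Fin n) (Fin n) ℂ := (ContractingWith.fixedPoint G hcontr).1 with hYbardef
  have hYbarS : Ybar ∈ SP := (ContractingWith.fixedPoint G hcontr).2
  have hfixc : Q - Aᴴ * hrpow Ybar (-(t/s)) * A - Bᴴ * hrpow Ybar (-(p/s)) * B = Ybar := by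
    have h0 := congrArg Subtype.val hfix
    rw [hGcoe] at h0
    exact h0
  have heq : Ybar + Aᴴ * hrpow Ybar (-(t/s)) * A + Bᴴ * hrpow Ybar (-(p/s)) * B = Q := by
    have h2 : (Q - Aᴴ * hrpow Ybar (-(t/s)) * A - Bᴴ * hrpow Ybar (-(p/s)) * B)
        + Aᴴ * hrpow Ybar (-(t/s)) * A + Bᴴ * hrpow Ybar (-(p/s)) * B = Q := by abel
    rw [hfixc] at h2
    exact h2
  have hYbarpd : Ybar.PosDef := posDef_of_psd_sub hβ0 hYbarS.1
  have hαβ1 : ((β - α) • (1 : Matrix (Fin n) (Fin n) ℂ)).PosSemidef :=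
    psd_rsmul Matrix.PosSemidef.one (by linarith)
  have hYbarα : (Ybar - α • (1 : Matrix (Fin n) (Fin n) ℂ)).PosSemidef := by
    have e : Ybar - α • (1 : Matrix (Fin n) (Fin n) ℂ)
        = (Ybar - β • 1) + (β - α) • (1 : Matrix (Fin n) (Fin n) ℂ) := by
      rw [sub_smul]
      abel
    rw [e]
    exact hYbarS.1.add hαβ1
  refine ⟨Ybar, ⟨hYbarpd, heq, hYbarα, hYbarS.2⟩, ?_⟩
  -- uniqueness
  rintro Z ⟨hZpd, hZeq, hZα, hZQ⟩
  have hZh : Z.IsHermitian := hZpd.1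
  have heigZ : ∀ i, α ≤ hZh.eigenvalues i := fun i => eig_ge_of_psd hZh hZα i
  have hGZ : Q - Aᴴ * hrpow Z (-(t/s)) * A - Bᴴ * hrpow Z (-(p/s)) * B = Z := by
    rw [← hZeq]
    abel
  have hZS : Z ∈ SP := ⟨hGZ ▸ hinv Z hZh heigZ, hZQ⟩
  have hfixZ : Function.IsFixedPt G ⟨Z, hZS⟩ := by
    refine Subtype.ext ?_
    rw [hGcoe]
    exact hGZ
  have huniq := hcontr.fixedPoint_unique hfixZ
  exact congrArg Subtype.val huniq


end MainTheoremProof
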